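/- If K is a Corson compact Hausdorff space that is not Eberlein compact, then the Alexandroff duplicate AD(K) is Corson compact but not semi-Eberlein. -/

import Mathlib

open Topology Set

universe u v

/-- A space is *M-scattered* if every nonempty subspace contains a nonempty
relatively open second-countable subset. -/
def MScattered (X : Type*) [TopologicalSpace X] : Prop :=
  ∀ A : Set X, A.Nonempty → ∃ U : Set X, IsOpen U ∧ (A ∩ U).Nonempty ∧
    SecondCountableTopology ↥(A ∩ U)

/-- Corson compact: embeds into the Σ-product of copies of `[0,1]`. -/
def CorsonCompact (K : Type u) [TopologicalSpace K] : Prop :=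
  ∃ (Γ : Type u) (f : K → Γ → unitInterval),
    Topology.IsEmbedding f ∧ ∀ k, {γ | f k γ ≠ 0}.Countable

/-- Eberlein compact: embeds into `c₀(Γ)`. -/
def EberleinCompact (K : Type u) [TopologicalSpace K] : Prop :=
  ∃ (Γ : Type u) (f : K → Γ → unitInterval),
    Topology.IsEmbedding f ∧ ∀ k, ∀ ε : ℝ, 0 < ε → {γ | ε < (f k γ : ℝ)}.Finite

/-- NY compact: embeds into a σ-product of compact metrizable spaces. -/
def NYCompact (K : Type u) [TopologicalSpace K] : Prop :=
  ∃ (Γ : Type u) (X : Γ → Type u) (t : ∀ γ, TopologicalSpace (X γ)),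
    (∀ γ, @CompactSpace (X γ) (t γ)) ∧
    (∀ γ, @TopologicalSpace.MetrizableSpace (X γ) (t γ)) ∧
    ∃ (a : ∀ γ, X γ) (f : K → ∀ γ, X γ),
      @Topology.IsEmbedding K (∀ γ, X γ) _ (@Pi.topologicalSpace Γ X t) f ∧
      ∀ k, {γ | f k γ ≠ a γ}.Finite

/-- ω-Corson compact: embeds into the σ-product of copies of `[0,1]`. -/
def OmegaCorson (K : Type u) [TopologicalSpace K] : Prop :=
  ∃ (Γ : Type u) (f : K → Γ → unitInterval),
    Topology.IsEmbedding f ∧ ∀ k, {γ | f k γ ≠ 0}.Finite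

/-- Semi-Eberlein: embeds into `[0,1]^Γ` with `h(K) ∩ c₀(Γ)` dense in `h(K)`. -/
def SemiEberlein (K : Type u) [TopologicalSpace K] : Prop :=
  ∃ (Γ : Type u) (h : K → Γ → unitInterval), Topology.IsEmbedding h ∧
    Set.range h ⊆
      closure (Set.range h ∩ {x | ∀ ε : ℝ, 0 < ε → {γ | ε < (x γ : ℝ)}.Finite})

/-- ω-Valdivia: embeds into `[0,1]^Γ` with `h(K) ∩ σ([0,1]^Γ)` dense in `h(K)`. -/
def OmegaValdivia (K : Type u) [TopologicalSpace K] : Prop :=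
  ∃ (Γ : Type u) (h : K → Γ → unitInterval), Topology.IsEmbedding h ∧
    Set.range h ⊆ closure (Set.range h ∩ {x | {γ | x γ ≠ 0}.Finite})

/-- NY-Valdivia: embeds into a product of Hilbert cubes with the σ-product trace dense. -/
def NYValdivia (K : Type u) [TopologicalSpace K] : Prop :=
  ∃ (Γ : Type u) (h : K → Γ → ℕ → unitInterval), Topology.IsEmbedding h ∧
    Set.range h ⊆ closure (Set.range h ∩ {x | {γ | x γ ≠ 0}.Finite})

/-- The topology of the Alexandroff duplicate on `X × Bool`: points `(x, true)` are
isolated, and basic neighborhoods of `(x, false)` are `(U × Bool) \ {(x, true)}`. -/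
def adTopology (X : Type*) [TopologicalSpace X] : TopologicalSpace (X × Bool) where
  IsOpen V := ∀ x : X, (x, false) ∈ V →
    ∃ U : Set X, IsOpen U ∧ x ∈ U ∧ {p : X × Bool | p.1 ∈ U ∧ p ≠ (x, true)} ⊆ V
  isOpen_univ := fun x _ => ⟨Set.univ, isOpen_univ, trivial, fun _ _ => trivial⟩
  isOpen_inter := by
    intro V W hV hW x hx
    obtain ⟨U1, hU1, hx1, hs1⟩ := hV x hx.1
    obtain ⟨U2, hU2, hx2, hs2⟩ := hW x hx.2
    exact ⟨U1 ∩ U2, hU1.inter hU2, ⟨hx1, hx2⟩,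
      fun p hp => ⟨hs1 ⟨hp.1.1, hp.2⟩, hs2 ⟨hp.1.2, hp.2⟩⟩⟩
  isOpen_sUnion := by
    intro S hS x hx
    obtain ⟨V, hVS, hxV⟩ := hx
    obtain ⟨U, hU, hxU, hsub⟩ := hS V hVS x hxV
    exact ⟨U, hU, hxU, fun p hp => ⟨V, hVS, hsub hp⟩⟩

/-- A space is metalindelöf if every open cover has a point-countable open refinement. -/
def Metalindelof (X : Type*) [TopologicalSpace X] : Prop :=
  ∀ 𝒰 : Set (Set X), (∀ U ∈ 𝒰, IsOpen U) → ⋃₀ 𝒰 = Set.univ →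
    ∃ 𝒱 : Set (Set X), (∀ V ∈ 𝒱, IsOpen V) ∧ ⋃₀ 𝒱 = Set.univ ∧
      (∀ V ∈ 𝒱, ∃ U ∈ 𝒰, V ⊆ U) ∧ ∀ x : X, {V ∈ 𝒱 | x ∈ V}.Countable

/-- Hereditarily metalindelöf: every subspace is metalindelöf. -/
def HereditarilyMetalindelof (X : Type*) [TopologicalSpace X] : Prop :=
  ∀ A : Set X, Metalindelof ↥A

section ADBasics

variable {K : Type u} [TopologicalSpace K]

theorem ad_isOpen_iff {s : Set (K × Bool)} :
    (adTopology K).IsOpen s ↔ ∀ x : K, (x, false) ∈ s →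
      ∃ U : Set K, IsOpen U ∧ x ∈ U ∧ {p : K × Bool | p.1 ∈ U ∧ p ≠ (x, true)} ⊆ s :=
  Iff.rfl

theorem ad_isOpen_of {s : Set (K × Bool)}
    (h : ∀ x : K, (x, false) ∈ s →
      ∃ U : Set K, IsOpen U ∧ x ∈ U ∧ {p : K × Bool | p.1 ∈ U ∧ p ≠ (x, true)} ⊆ s) :
    (adTopology K).IsOpen s := h

theorem ad_isOpen_elim {s : Set (K × Bool)} (hs : (adTopology K).IsOpen s) :
    ∀ x : K, (x, false) ∈ s →
      ∃ U : Set K, IsOpen U ∧ x ∈ U ∧ {p : K × Bool | p.1 ∈ U ∧ p ≠ (x, true)} ⊆ s := hs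

theorem ad_isOpen_singleton_true (x : K) : (adTopology K).IsOpen {(x, true)} := by
  apply ad_isOpen_of
  intro z hz
  simp only [Set.mem_singleton_iff, Prod.mk.injEq] at hz
  exact absurd hz.2 (by simp)

theorem ad_isOpen_singleton_false {x : K} (hx : IsOpen ({x} : Set K)) :
    (adTopology K).IsOpen {(x, false)} := by
  apply ad_isOpen_of
  intro z hz
  simp only [Set.mem_singleton_iff, Prod.mk.injEq] at hz
  refine ⟨{x}, hx, by simp [hz.1], ?_⟩
  rintro ⟨y, b⟩ ⟨hy, hne⟩
  simp only [Set.mem_singleton_iff] at hy ⊢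
  cases b
  · simp [hy, hz.1]
  · exact absurd (by simp [hy, hz.1]) hne

theorem ad_continuous_fst :
    @Continuous (K × Bool) K (adTopology K) _ Prod.fst := by
  rw [@continuous_def _ _ (adTopology K) _]
  intro U hU
  exact ad_isOpen_of (fun x hx => ⟨U, hU, hx, fun p hp => hp.1⟩)

theorem ad_continuous_false_incl :
    @Continuous K (K × Bool) _ (adTopology K) (fun x => (x, false)) := by
  rw [@continuous_def _ _ _ (adTopology K)]
  intro V hV
  rw [isOpen_iff_forall_mem_open]
  intro x hx
  obtain ⟨U, hU, hxU, hsub⟩ := ad_isOpen_elim hV x hx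
  exact ⟨U, fun y hy => hsub ⟨hy, by simp⟩, hU, hxU⟩

theorem ad_compactSpace [CompactSpace K] :
    @CompactSpace (K × Bool) (adTopology K) := by
  classical
  letI := adTopology K
  constructor
  apply isCompact_of_finite_subcover
  intro ι W hW hcov
  have hmem : ∀ p : K × Bool, ∃ i, p ∈ W i := by
    intro p
    have := hcov (Set.mem_univ p)
    simpa using this
  choose i0 hi0 using fun x => hmem (x, false)
  choose i1 hi1 using fun x => hmem (x, true)
  have hU : ∀ x : K, ∃ U : Set K, IsOpen U ∧ x ∈ U ∧
      {p : K × Bool | p.1 ∈ U ∧ p ≠ (x, true)} ⊆ W (i0 x) := fun x =>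
    ad_isOpen_elim (hW (i0 x)) x (hi0 x)
  choose U hUo hUx hUsub using hU
  obtain ⟨t, ht⟩ := isCompact_univ.elim_finite_subcover U hUo
    (fun x _ => Set.mem_iUnion.mpr ⟨x, hUx x⟩)
  refine ⟨t.image i0 ∪ t.image i1, ?_⟩
  rintro ⟨y, b⟩ -
  obtain ⟨x, hxt, hyUx⟩ : ∃ x ∈ t, y ∈ U x := by
    have := ht (Set.mem_univ y)
    simpa using this
  by_cases hp : (y, b) = (x, true)
  · refine Set.mem_iUnion₂.mpr ⟨i1 x, ?_, ?_⟩
    · exact Finset.mem_union_right _ (Finset.mem_image_of_mem _ hxt)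
    · rw [hp]; exact hi1 x
  · refine Set.mem_iUnion₂.mpr ⟨i0 x, ?_, hUsub x ⟨hyUx, hp⟩⟩
    exact Finset.mem_union_left _ (Finset.mem_image_of_mem _ hxt)

end ADBasics
section Part1

variable {K : Type u} [TopologicalSpace K] [CompactSpace K] [T2Space K]

theorem ad_corson (hC : CorsonCompact K) :
    @CorsonCompact (K × Bool) (adTopology K) := by
  classical
  obtain ⟨Γ₀, f, hf, hcnt⟩ := hC
  letI := adTopology K
  refine ⟨Γ₀ ⊕ K, fun p => Sum.elim (f p.1) (fun y => if p = (y, true) then 1 else 0), ?_, ?_⟩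
  · haveI : CompactSpace (K × Bool) := ad_compactSpace
    have hcont : Continuous
        (fun p : K × Bool => Sum.elim (f p.1) (fun y => if p = (y, true) then 1 else 0) :
          K × Bool → (Γ₀ ⊕ K) → unitInterval) := by
      apply continuous_pi
      rintro (γ | y)
      · have : Continuous (fun x : K => f x γ) := (continuous_apply γ).comp hf.continuous
        exact this.comp ad_continuous_fst
      · -- indicator of the clopen singleton {(y, true)}
        have hopen : IsOpen ({(y, true)} : Set (K × Bool)) := ad_isOpen_singleton_true y
        have hclosed : IsOpen ({(y, true)}ᶜ : Set (K × Bool)) := by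
          apply ad_isOpen_of
          intro x hx
          by_cases hxy : x = y
          · refine ⟨Set.univ, isOpen_univ, trivial, ?_⟩
            rintro ⟨z, b⟩ ⟨-, hne⟩
            simp only [Set.mem_compl_iff, Set.mem_singleton_iff]
            rw [hxy] at hne; exact hne
          · refine ⟨{y}ᶜ, isOpen_compl_singleton, hxy, ?_⟩
            rintro ⟨z, b⟩ ⟨hz, -⟩
            simp only [Set.mem_compl_iff, Set.mem_singleton_iff] at hz ⊢
            intro h; apply hz; rw [Prod.mk.injEq] at h; exact h.1
        rw [continuous_def]
        intro V hV
        show IsOpen ((fun p : K × Bool => (if p = (y, true) then (1 : unitInterval) else 0)) ⁻¹' V)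
        have : (fun p : K × Bool => (if p = (y, true) then (1 : unitInterval) else 0)) ⁻¹' V =
            (if (1 : unitInterval) ∈ V then {((y, true) : K × Bool)} else ∅) ∪
            (if (0 : unitInterval) ∈ V then {((y, true) : K × Bool)}ᶜ else ∅) := by
          ext p
          by_cases hp : p = (y, true) <;> by_cases h1 : (1 : unitInterval) ∈ V <;>
            by_cases h0 : (0 : unitInterval) ∈ V <;>
            simp [hp, h1, h0]
        rw [this]
        apply IsOpen.union
        · split_ifs
          · exact hopen
          · exact isOpen_empty
        · split_ifs
          · exact hclosed
          · exact isOpen_empty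
    have hinj : Function.Injective
        (fun p : K × Bool => Sum.elim (f p.1) (fun y => if p = (y, true) then 1 else 0) :
          K × Bool → (Γ₀ ⊕ K) → unitInterval) := by
      rintro ⟨x, b⟩ ⟨x', b'⟩ hpp
      have h1 : f x = f x' := by
        funext γ
        exact congrFun hpp (Sum.inl γ)
      have hx : x = x' := hf.injective h1
      subst hx
      have h2 := congrFun hpp (Sum.inr x)
      simp only [Sum.elim_inr] at h2
      have hone : (1 : unitInterval) ≠ 0 := by
        intro h
        have : (1 : ℝ) = 0 := congrArg Subtype.val h
        norm_num at this
      have hbb : b = b' := by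
        cases b <;> cases b'
        · rfl
        · exfalso; rw [if_neg (by simp), if_pos rfl] at h2; exact hone h2.symm
        · exfalso; rw [if_pos rfl, if_neg (by simp)] at h2; exact hone h2
        · rfl
      rw [hbb]
    exact (hcont.isClosedEmbedding hinj).isEmbedding
  · rintro ⟨x, b⟩
    have hsub : {γ' : Γ₀ ⊕ K |
        Sum.elim (f x) (fun y => if (x, b) = (y, true) then (1 : unitInterval) else 0) γ' ≠ 0} ⊆
        Sum.inl '' {γ | f x γ ≠ 0} ∪ Sum.inr '' {x} := by
      rintro (γ | y) hγ
      · exact Or.inl ⟨γ, hγ, rfl⟩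
      · simp only [Set.mem_setOf_eq, Sum.elim_inr, ne_eq] at hγ
        right
        refine ⟨y, ?_, rfl⟩
        simp only [Set.mem_singleton_iff]
        by_contra hxy
        apply hγ
        rw [if_neg]
        intro h
        rw [Prod.mk.injEq] at h
        exact hxy h.1.symm
    exact Set.Countable.mono hsub
      (((hcnt x).image _).union ((Set.countable_singleton x).image _))
end Part1
section Part2a

variable {K : Type u} [TopologicalSpace K] [CompactSpace K] [T2Space K]
variable {Γ : Type v} {h : K × Bool → Γ → unitInterval}

/-- Continuity of `h` at `(x, false)` in the Alexandroff duplicate, coordinatewise. -/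
theorem ad_approx (hc : @Continuous (K × Bool) (Γ → unitInterval) (adTopology K) _ h)
    (x : K) (γ : Γ) {ε : ℝ} (hε : 0 < ε) :
    ∃ U : Set K, IsOpen U ∧ x ∈ U ∧
      (∀ y ∈ U, |(h (y, false) γ : ℝ) - (h (x, false) γ : ℝ)| < ε) ∧
      (∀ y ∈ U, y ≠ x → |(h (y, true) γ : ℝ) - (h (x, false) γ : ℝ)| < ε) := by
  have hWo : IsOpen {w : Γ → unitInterval | |(w γ : ℝ) - (h (x, false) γ : ℝ)| < ε} := by
    have : Continuous (fun w : Γ → unitInterval => |(w γ : ℝ) - (h (x, false) γ : ℝ)|) :=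
      ((continuous_subtype_val.comp (continuous_apply γ)).sub continuous_const).abs
    exact isOpen_Iio.preimage this
  have hpre := (@continuous_def _ _ (adTopology K) _ h).mp hc _ hWo
  have hxmem : (x, false) ∈ h ⁻¹' {w : Γ → unitInterval | |(w γ : ℝ) - (h (x, false) γ : ℝ)| < ε} := by
    simp [hε]
  obtain ⟨U, hUo, hxU, hsub⟩ := ad_isOpen_elim hpre x hxmem
  refine ⟨U, hUo, hxU, ?_, ?_⟩
  · intro y hy
    have hm : ((y, false) : K × Bool) ∈ {p : K × Bool | p.1 ∈ U ∧ p ≠ (x, true)} :=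
      ⟨hy, by simp⟩
    exact hsub hm
  · intro y hy hne
    have hm : ((y, true) : K × Bool) ∈ {p : K × Bool | p.1 ∈ U ∧ p ≠ (x, true)} :=
      ⟨hy, by simp [hne]⟩
    exact hsub hm

/-- Points of `AD(K)` that are isolated are sent into `c₀` by a semi-Eberlein embedding. -/
theorem ad_c0_of_isolated
    (hemb : @Topology.IsEmbedding (K × Bool) (Γ → unitInterval) (adTopology K) _ h)
    (hsub : Set.range h ⊆
      closure (Set.range h ∩ {x | ∀ ε : ℝ, 0 < ε → {γ | ε < (x γ : ℝ)}.Finite}))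
    (p : K × Bool) (hp : (adTopology K).IsOpen {p}) :
    ∀ ε : ℝ, 0 < ε → {γ | ε < (h p γ : ℝ)}.Finite := by
  obtain ⟨⟨heq⟩, hinj⟩ := hemb
  have h1 : @IsOpen (K × Bool) (TopologicalSpace.induced h inferInstance) {p} := by
    rw [← heq]; exact hp
  obtain ⟨W, hWo, hWeq⟩ := isOpen_induced_iff.mp h1
  have hmem : h p ∈ closure (Set.range h ∩
      {x | ∀ ε : ℝ, 0 < ε → {γ | ε < (x γ : ℝ)}.Finite}) := hsub ⟨p, rfl⟩
  have hpW : h p ∈ W := by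
    have : p ∈ h ⁻¹' W := by rw [hWeq]; rfl
    exact this
  obtain ⟨w, hwW, ⟨q, rfl⟩, hwc0⟩ := mem_closure_iff.mp hmem W hWo hpW
  have : q ∈ h ⁻¹' W := hwW
  rw [hWeq] at this
  rw [Set.mem_singleton_iff] at this
  rw [this] at hwc0
  exact hwc0

/-- The set of points where the two copies differ by at least `ε` in coordinate `γ` is finite. -/
theorem ad_finite_E (hc : @Continuous (K × Bool) (Γ → unitInterval) (adTopology K) _ h)
    (γ : Γ) {ε : ℝ} (hε : 0 < ε) :
    {z : K | ε ≤ |(h (z, true) γ : ℝ) - (h (z, false) γ : ℝ)|}.Finite := by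
  have hU : ∀ x : K, ∃ U : Set K, IsOpen U ∧ x ∈ U ∧
      (∀ y ∈ U, |(h (y, false) γ : ℝ) - (h (x, false) γ : ℝ)| < ε / 3) ∧
      (∀ y ∈ U, y ≠ x → |(h (y, true) γ : ℝ) - (h (x, false) γ : ℝ)| < ε / 3) :=
    fun x => ad_approx hc x γ (by linarith)
  choose U hUo hUx hUg hUφ using hU
  obtain ⟨t, ht⟩ := isCompact_univ.elim_finite_subcover U hUo
    (fun x _ => Set.mem_iUnion.mpr ⟨x, hUx x⟩)
  apply Set.Finite.subset t.finite_toSet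
  intro z hz
  obtain ⟨x, hxt, hzU⟩ : ∃ x ∈ t, z ∈ U x := by
    have := ht (Set.mem_univ z)
    simpa using this
  rcases eq_or_ne z x with rfl | hne
  · exact hxt
  · exfalso
    have h1 := hUg x z hzU
    have h2 := hUφ x z hzU hne
    have h3 : |(h (z, true) γ : ℝ) - (h (z, false) γ : ℝ)| < ε := by
      have := abs_sub_abs_le_abs_sub ((h (z, true) γ : ℝ) - (h (x, false) γ : ℝ))
        ((h (z, false) γ : ℝ) - (h (x, false) γ : ℝ))
      calc |(h (z, true) γ : ℝ) - (h (z, false) γ : ℝ)|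
          = |((h (z, true) γ : ℝ) - (h (x, false) γ : ℝ)) -
            ((h (z, false) γ : ℝ) - (h (x, false) γ : ℝ))| := by ring_nf
        _ ≤ |(h (z, true) γ : ℝ) - (h (x, false) γ : ℝ)| +
            |(h (z, false) γ : ℝ) - (h (x, false) γ : ℝ)| := abs_sub _ _
        _ < ε / 3 + ε / 3 := by exact add_lt_add h2 h1
        _ < ε := by linarith
    exact absurd hz (by simp only [Set.mem_setOf_eq]; push_neg; exact h3)

end Part2a
set_option linter.unusedSectionVars false

section FU

variable {K : Type u} [TopologicalSpace K]

/-- In a (subspace of a) Σ-product, every point in the closure of a set is the limit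
of a sequence from that set. (Fréchet–Urysohn property of Corson compacta.) -/
theorem corson_seq {Γ₀ : Type v} {f : K → Γ₀ → unitInterval}
    (hf : Topology.IsEmbedding f) (hcnt : ∀ k : K, {γ | f k γ ≠ 0}.Countable)
    (z : K) (hz : ¬ IsOpen ({z} : Set K)) :
    ∃ y : ℕ → K, (∀ m, y m ≠ z) ∧ Filter.Tendsto y Filter.atTop (𝓝 z) := by
  classical
  have hzcl : z ∈ closure ({z}ᶜ : Set K) := by
    by_contra hcon
    apply hz
    have : ∃ V : Set K, IsOpen V ∧ z ∈ V ∧ V ∩ {z}ᶜ = ∅ := by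
      rw [mem_closure_iff] at hcon
      push_neg at hcon
      obtain ⟨V, hVo, hzV, hVdisj⟩ := hcon
      exact ⟨V, hVo, hzV, hVdisj⟩
    obtain ⟨V, hVo, hzV, hVd⟩ := this
    have : V = {z} := by
      apply Set.eq_singleton_iff_unique_mem.mpr
      refine ⟨hzV, fun w hw => ?_⟩
      by_contra hwz
      exact absurd (Set.mem_inter hw hwz) (by rw [hVd]; exact Set.notMem_empty w)
    rw [← this]; exact hVo
  -- choice of approximating points
  have hpick : ∀ (F : Finset Γ₀) (n : ℕ), ∃ y : K, y ≠ z ∧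
      ∀ γ ∈ F, |(f y γ : ℝ) - (f z γ : ℝ)| < 1 / (n + 1) := by
    intro F n
    have hNo : IsOpen {y : K | ∀ γ ∈ F, |(f y γ : ℝ) - (f z γ : ℝ)| < 1 / (n + 1)} := by
      have : {y : K | ∀ γ ∈ F, |(f y γ : ℝ) - (f z γ : ℝ)| < 1 / (n + 1)} =
          ⋂ γ ∈ F, {y : K | |(f y γ : ℝ) - (f z γ : ℝ)| < 1 / (n + 1)} := by
        ext y; simp
      rw [this]
      apply isOpen_biInter_finset
      intro γ _
      have hco : Continuous (fun y : K => |(f y γ : ℝ) - (f z γ : ℝ)|) :=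
        ((continuous_subtype_val.comp ((continuous_apply γ).comp hf.continuous)).sub
          continuous_const).abs
      exact isOpen_Iio.preimage hco
    have hzN : z ∈ {y : K | ∀ γ ∈ F, |(f y γ : ℝ) - (f z γ : ℝ)| < 1 / (n + 1)} := by
      intro γ _; simp; positivity
    obtain ⟨w, hwN, hwz⟩ := mem_closure_iff.mp hzcl _ hNo hzN
    exact ⟨w, hwz, hwN⟩
  choose pick hpick_ne hpick_close using hpick
  -- the countable support sets
  let supp : K → Set Γ₀ := fun y => {γ | f y γ ≠ 0}
  let S : ℕ → Set Γ₀ := fun m => Nat.rec (supp z)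
    (fun _ Sm => Sm ∪ ⋃ (F : Finset Γ₀) (_ : ↑F ⊆ Sm) (n : ℕ), supp (pick F n)) m
  have hS_succ : ∀ m, S (m + 1) =
      S m ∪ ⋃ (F : Finset Γ₀) (_ : ↑F ⊆ S m) (n : ℕ), supp (pick F n) := fun m => rfl
  have hS_cnt : ∀ m, (S m).Countable := by
    intro m
    induction m with
    | zero => exact hcnt z
    | succ m ih =>
      rw [hS_succ]
      apply ih.union
      have hFc : {F : Finset Γ₀ | ↑F ⊆ S m}.Countable := by
        have := Set.countable_setOf_finite_subset ih
        have hsub : {F : Finset Γ₀ | ↑F ⊆ S m} ⊆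
            (fun F : Finset Γ₀ => (↑F : Set Γ₀)) ⁻¹' {t : Set Γ₀ | t.Finite ∧ t ⊆ S m} := by
          intro F hF
          exact ⟨F.finite_toSet, hF⟩
        exact (this.preimage Finset.coe_injective).mono hsub
      have : (⋃ (F : Finset Γ₀) (_ : ↑F ⊆ S m) (n : ℕ), supp (pick F n)) =
          ⋃ (F ∈ {F : Finset Γ₀ | ↑F ⊆ S m}) (n : ℕ), supp (pick F n) := by
        simp
      rw [this]
      apply hFc.biUnion
      intro F _
      exact Set.countable_iUnion (fun n => hcnt (pick F n))
  have hS_mono : Monotone S := by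
    apply monotone_nat_of_le_succ
    intro m
    rw [hS_succ]; exact Set.subset_union_left
  let Stot : Set Γ₀ := ⋃ m, S m
  have hStot_cnt : Stot.Countable := Set.countable_iUnion hS_cnt
  have hS_sub : ∀ m, S m ⊆ Stot := fun m => Set.subset_iUnion S m
  have hFin_in : ∀ F : Finset Γ₀, ↑F ⊆ Stot → ∃ m, ↑F ⊆ S m := by
    intro F hF
    have : ∀ γ ∈ F, ∃ m, γ ∈ S m := by
      intro γ hγ
      exact Set.mem_iUnion.mp (hF hγ)
    choose M hM using this
    refine ⟨F.sup fun γ => if h : γ ∈ F then M γ h else 0, ?_⟩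
    intro γ hγ
    have hγ' : γ ∈ F := hγ
    have h1 : M γ hγ' ≤ F.sup fun γ => if h : γ ∈ F then M γ h else 0 := by
      have h2 := Finset.le_sup (f := fun γ => if h : γ ∈ F then M γ h else 0) hγ'
      rwa [dif_pos hγ'] at h2
    exact hS_mono h1 (hM γ hγ')
  have hsupp_in : ∀ (F : Finset Γ₀) (n : ℕ), ↑F ⊆ Stot → supp (pick F n) ⊆ Stot := by
    intro F n hF
    obtain ⟨m, hm⟩ := hFin_in F hF
    intro γ hγ
    apply hS_sub (m + 1)
    rw [hS_succ]
    right
    exact Set.mem_iUnion.mpr ⟨F, Set.mem_iUnion.mpr ⟨hm, Set.mem_iUnion.mpr ⟨n, hγ⟩⟩⟩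
  -- Stot is nonempty
  have hStot_ne : Stot.Nonempty := by
    by_contra hcon
    rw [Set.not_nonempty_iff_eq_empty] at hcon
    have h0 : ∀ γ, f (pick ∅ 0) γ = 0 := by
      intro γ
      by_contra hγ
      have : γ ∈ Stot := hsupp_in ∅ 0 (by simp [hcon]) hγ
      rw [hcon] at this; exact this
    have hz0 : ∀ γ, f z γ = 0 := by
      intro γ
      by_contra hγ
      have : γ ∈ Stot := hS_sub 0 hγ
      rw [hcon] at this; exact this
    have : f (pick ∅ 0) = f z := by funext γ; rw [h0, hz0]
    exact hpick_ne ∅ 0 (hf.injective this)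
  obtain ⟨e, he⟩ := hStot_cnt.exists_eq_range hStot_ne
  -- the sequence
  let F : ℕ → Finset Γ₀ := fun m => (Finset.range (m + 1)).image e
  have hFsub : ∀ m, ↑(F m) ⊆ Stot := by
    intro m γ hγ
    simp only [F, Finset.coe_image] at hγ
    obtain ⟨j, _, rfl⟩ := hγ
    rw [he]; exact Set.mem_range_self j
  refine ⟨fun m => pick (F m) m, fun m => hpick_ne _ _, ?_⟩
  rw [hf.toIsInducing.tendsto_nhds_iff]
  rw [tendsto_pi_nhds]
  intro γ
  by_cases hγS : γ ∈ Stot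
  · -- γ = e j for some j
    rw [he] at hγS
    obtain ⟨j, rfl⟩ := hγS
    rw [Metric.tendsto_atTop]
    intro ε hε
    obtain ⟨Nε, hNε⟩ := exists_nat_gt (1 / ε)
    refine ⟨max j Nε, fun m hm => ?_⟩
    have hjm : e j ∈ F m := by
      simp only [F, Finset.mem_image]
      exact ⟨j, Finset.mem_range.mpr (by omega), rfl⟩
    have hclose := hpick_close (F m) m (e j) hjm
    rw [Subtype.dist_eq, Real.dist_eq]
    calc |(f (pick (F m) m) (e j) : ℝ) - (f z (e j) : ℝ)| < 1 / (m + 1) := hclose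
      _ ≤ 1 / (Nε + 1) := by
        apply one_div_le_one_div_of_le
        · positivity
        · have : Nε ≤ m := le_trans (le_max_right _ _) hm
          exact_mod_cast by omega
      _ < ε := by
        rw [div_lt_iff₀ (by positivity)]
        rw [div_lt_iff₀ hε] at hNε
        nlinarith [hε]
  · have hz0 : f z γ = 0 := by
      by_contra hγ
      exact hγS (hS_sub 0 hγ)
    have hy0 : ∀ m, f (pick (F m) m) γ = 0 := by
      intro m
      by_contra hγ
      exact hγS (hsupp_in (F m) m (hFsub m) hγ)
    have heqf : (fun m => (f ∘ fun m => pick (F m) m) m γ) = fun _ => f z γ := by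
      funext m
      simp only [Function.comp_apply]
      rw [hy0 m, hz0]
    exact heqf ▸ tendsto_const_nhds

end FU
section Part2Main

variable {K : Type u} [TopologicalSpace K] [CompactSpace K] [T2Space K]

theorem eberlein_of_ad_semiEberlein (hC : CorsonCompact K)
    (hSE : @SemiEberlein (K × Bool) (adTopology K)) : EberleinCompact K := by
  classical
  obtain ⟨Γ, h, hemb, hsub⟩ := hSE
  obtain ⟨Γ₀, f, hf, hcnt⟩ := hC
  obtain ⟨⟨heq⟩, hinj⟩ := hemb
  have hembF : @Topology.IsEmbedding (K × Bool) (Γ → unitInterval) (adTopology K) _ h :=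
    @Topology.IsEmbedding.mk (K × Bool) (Γ → unitInterval) (adTopology K) _ h
      (@Topology.IsInducing.mk (K × Bool) (Γ → unitInterval) (adTopology K) _ h heq) hinj
  have hcont : @Continuous (K × Bool) (Γ → unitInterval) (adTopology K) _ h := by
    rw [@continuous_iff_le_induced _ _ _ (adTopology K) _]
    exact le_of_eq heq
  -- φ := h (·, true) is pointwise c₀
  have hφc0 : ∀ x : K, ∀ ε : ℝ, 0 < ε → {γ : Γ | ε < (h (x, true) γ : ℝ)}.Finite := fun x =>
    ad_c0_of_isolated hembF hsub (x, true) (ad_isOpen_singleton_true x)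
  -- g := h (·, false) is c₀ at isolated points
  have hgc0 : ∀ x : K, IsOpen ({x} : Set K) →
      ∀ ε : ℝ, 0 < ε → {γ : Γ | ε < (h (x, false) γ : ℝ)}.Finite :=
    fun x hx => ad_c0_of_isolated hembF hsub (x, false) (ad_isOpen_singleton_false hx)
  -- sequences converging to non-isolated points
  have hseq : ∀ z : K, ¬ IsOpen ({z} : Set K) →
      ∃ y : ℕ → K, (∀ m, y m ≠ z) ∧ Filter.Tendsto y Filter.atTop (𝓝 z) :=
    corson_seq hf hcnt
  choose! Y hYne hYtend using hseq
  -- the auxiliary finite sets B z k m ⊆ Γ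
  let B : K → ℕ → ℕ → Set Γ := fun z k m =>
    Nat.casesOn m {γ : Γ | 1 / (4 * ((k : ℝ) + 1)) ≤ (h (z, true) γ : ℝ)}
      (fun m' => {γ : Γ | 1 / (4 * ((k : ℝ) + 1)) ≤ (h (Y z m', true) γ : ℝ)})
  have hBfin : ∀ z k m, (B z k m).Finite := by
    intro z k m
    have hpos : 0 < 1 / (8 * ((k : ℝ) + 1)) := by positivity
    have hlt : 1 / (8 * ((k : ℝ) + 1)) < 1 / (4 * ((k : ℝ) + 1)) := by
      apply one_div_lt_one_div_of_lt
      · positivity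
      · nlinarith [Nat.cast_nonneg (α := ℝ) k]
    cases m with
    | zero =>
      apply (hφc0 z _ hpos).subset
      intro γ hγ
      exact lt_of_lt_of_le hlt hγ
    | succ m' =>
      apply (hφc0 (Y z m') _ hpos).subset
      intro γ hγ
      exact lt_of_lt_of_le hlt hγ
  -- the finite "deviation" sets E γ k ⊆ K
  let E : Γ → ℕ → Set K := fun γ k =>
    {z : K | 1 / (2 * ((k : ℝ) + 1)) ≤ |(h (z, true) γ : ℝ) - (h (z, false) γ : ℝ)|}
  have hEfin : ∀ γ k, (E γ k).Finite := by
    intro γ k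
    exact ad_finite_E hcont γ (by positivity)
  -- coverage: if z is non-isolated and z ∈ E γ k then γ appears in some B z k m
  have hcov : ∀ (z : K) (k : ℕ) (γ : Γ), ¬ IsOpen ({z} : Set K) → z ∈ E γ k →
      ∃ m, γ ∈ B z k m := by
    intro z k γ hziso hzE
    set δ : ℝ := 1 / (4 * ((k : ℝ) + 1)) with hδdef
    have hδpos : 0 < δ := by positivity
    by_cases hφz : δ ≤ (h (z, true) γ : ℝ)
    · exact ⟨0, hφz⟩
    · push_neg at hφz
      have h2δ : 2 * δ = 1 / (2 * ((k : ℝ) + 1)) := by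
        rw [hδdef]
        rw [eq_div_iff (by positivity : (2 * ((k : ℝ) + 1)) ≠ 0)]
        field_simp
        ring
      have hE' : 2 * δ ≤ |(h (z, true) γ : ℝ) - (h (z, false) γ : ℝ)| := by
        rw [h2δ]; exact hzE
      have hgz : δ < (h (z, false) γ : ℝ) := by
        rcases abs_cases ((h (z, true) γ : ℝ) - (h (z, false) γ : ℝ)) with ⟨habs, -⟩ | ⟨habs, -⟩
        · rw [habs] at hE'
          have h0 : 0 ≤ (h (z, false) γ : ℝ) := (h (z, false) γ).2.1
          linarith
        · rw [habs] at hE'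
          have h0 : 0 ≤ (h (z, true) γ : ℝ) := (h (z, true) γ).2.1
          linarith
      obtain ⟨U, hUo, hzU, -, hUφ⟩ := ad_approx hcont z γ (ε := (h (z, false) γ : ℝ) - δ)
        (by linarith)
      have hev : ∃ m, Y z m ∈ U :=
        ((hYtend z hziso).eventually (hUo.mem_nhds hzU)).exists
      obtain ⟨m, hm⟩ := hev
      have hφm := hUφ (Y z m) hm (hYne z hziso m)
      refine ⟨m + 1, ?_⟩
      show δ ≤ (h (Y z m, true) γ : ℝ)
      have := abs_lt.mp hφm
      linarith [this.1]
  choose! rnk hrnk using hcov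
  -- the "colour" of a coordinate
  let col : Γ → ℕ → ℕ := fun γ k => sSup ((fun z => rnk z k γ) '' E γ k)
  have hcol : ∀ (γ : Γ) (k : ℕ) (z : K), z ∈ E γ k → rnk z k γ ≤ col γ k := by
    intro γ k z hz
    exact le_csSup (((hEfin γ k).image _).bddAbove) (Set.mem_image_of_mem _ hz)
  -- the Eberlein embedding
  have hmem : ∀ (x : K) (p : Γ × ℕ),
      max 0 ((h (x, false) p.1 : ℝ) - 1 / ((p.2 : ℝ) + 1)) / ((p.2 : ℝ) + (col p.1 p.2) + 2)
        ∈ Set.Icc (0 : ℝ) 1 := by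
    intro x p
    have hden : (0 : ℝ) < (p.2 : ℝ) + (col p.1 p.2) + 2 := by positivity
    constructor
    · apply div_nonneg (le_max_left 0 _) hden.le
    · rw [div_le_one hden]
      have h1 : (h (x, false) p.1 : ℝ) ≤ 1 := (h (x, false) p.1).2.2
      have h2 : (0:ℝ) ≤ (p.2 : ℝ) + (col p.1 p.2) := by positivity
      have h3 : (0:ℝ) < 1 / ((p.2 : ℝ) + 1) := by positivity
      apply max_le <;> linarith
  let ψ : K → Γ × ℕ → unitInterval := fun x p =>
    ⟨max 0 ((h (x, false) p.1 : ℝ) - 1 / ((p.2 : ℝ) + 1)) / ((p.2 : ℝ) + (col p.1 p.2) + 2),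
      hmem x p⟩
  have hgKcont : Continuous (fun x : K => h (x, false)) := by
    exact @Continuous.comp K (K × Bool) (Γ → unitInterval) _ (adTopology K) _
      (fun x : K => (x, false)) h hcont ad_continuous_false_incl
  have hψcont : Continuous ψ := by
    apply continuous_pi
    intro p
    apply Continuous.subtype_mk
    apply Continuous.div_const
    apply Continuous.max continuous_const
    apply Continuous.sub _ continuous_const
    exact continuous_subtype_val.comp ((continuous_apply p.1).comp hgKcont)
  have hψinj : Function.Injective ψ := by
    have key : ∀ x x' : K, ψ x = ψ x' → ∀ γ : Γ,
        (h (x', false) γ : ℝ) < (h (x, false) γ : ℝ) → False := by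
      intro x x' hψeq γ hlt
      have ha0 : 0 ≤ (h (x', false) γ : ℝ) := (h (x', false) γ).2.1
      have hapos : 0 < (h (x, false) γ : ℝ) := lt_of_le_of_lt ha0 hlt
      obtain ⟨k, hk⟩ := exists_nat_one_div_lt hapos
      have hcoord := congrFun hψeq (γ, k)
      have hval : max 0 ((h (x, false) γ : ℝ) - 1 / ((k : ℝ) + 1)) / ((k : ℝ) + (col γ k) + 2)
          = max 0 ((h (x', false) γ : ℝ) - 1 / ((k : ℝ) + 1)) / ((k : ℝ) + (col γ k) + 2) :=
        congrArg Subtype.val hcoord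
      have hden : ((k : ℝ) + (col γ k) + 2) ≠ 0 := by positivity
      have hnum : max 0 ((h (x, false) γ : ℝ) - 1 / ((k : ℝ) + 1))
          = max 0 ((h (x', false) γ : ℝ) - 1 / ((k : ℝ) + 1)) := by
        have h5 := congrArg (fun t : ℝ => t * ((k : ℝ) + (col γ k) + 2)) hval
        rwa [div_mul_cancel₀ _ hden, div_mul_cancel₀ _ hden] at h5
      have hL : max 0 ((h (x, false) γ : ℝ) - 1 / ((k : ℝ) + 1))
          = (h (x, false) γ : ℝ) - 1 / ((k : ℝ) + 1) := max_eq_right (by linarith)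
      have hR : max 0 ((h (x', false) γ : ℝ) - 1 / ((k : ℝ) + 1))
          < (h (x, false) γ : ℝ) - 1 / ((k : ℝ) + 1) := by
        apply max_lt (by linarith) (by linarith)
      rw [hL] at hnum
      linarith [hR]
    intro x x' hψeq
    by_contra hne
    have hdiff : ∃ γ : Γ, (h (x, false) γ : ℝ) ≠ (h (x', false) γ : ℝ) := by
      by_contra hcon
      push_neg at hcon
      have : h (x, false) = h (x', false) := funext fun γ => Subtype.ext (hcon γ)
      have := hinj this
      rw [Prod.mk.injEq] at this
      exact hne this.1
    obtain ⟨γ, hγ⟩ := hdiff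
    rcases lt_or_gt_of_ne hγ with hlt | hlt
    · exact key x' x hψeq.symm γ hlt
    · exact key x x' hψeq γ hlt
  refine ⟨Γ × ℕ, ψ, (hψcont.isClosedEmbedding hψinj).isEmbedding, ?_⟩
  intro x ε hε
  set N : ℕ := ⌈1 / ε⌉₊ + 1 with hN
  -- finiteness of the γ-sections
  have hA : ∀ k : ℕ,
      {γ : Γ | 1 / ((k : ℝ) + 1) < (h (x, false) γ : ℝ) ∧ col γ k < N}.Finite := by
    intro k
    by_cases hiso : IsOpen ({x} : Set K)
    · apply (hgc0 x hiso (1 / ((k : ℝ) + 1)) (by positivity)).subset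
      intro γ hγ
      exact hγ.1
    · have hsubB : {γ : Γ | 1 / ((k : ℝ) + 1) < (h (x, false) γ : ℝ) ∧ col γ k < N} ⊆
          ⋃ m ∈ Finset.range N, B x k m := by
        intro γ hγ
        obtain ⟨hγg, hγcol⟩ := hγ
        have hNpos : 0 < N := by omega
        by_cases hφx : 1 / (4 * ((k : ℝ) + 1)) ≤ (h (x, true) γ : ℝ)
        · exact Set.mem_biUnion (Finset.mem_range.mpr hNpos) hφx
        · push_neg at hφx
          have hxE : x ∈ E γ k := by
            show 1 / (2 * ((k : ℝ) + 1)) ≤ |(h (x, true) γ : ℝ) - (h (x, false) γ : ℝ)|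
            have habs : (h (x, false) γ : ℝ) - (h (x, true) γ : ℝ) ≤
                |(h (x, true) γ : ℝ) - (h (x, false) γ : ℝ)| := by
              rw [abs_sub_comm]
              exact le_abs_self _
            have hineq : 1 / (2 * ((k : ℝ) + 1)) ≤
                (h (x, false) γ : ℝ) - (h (x, true) γ : ℝ) := by
              have e1 : 1 / ((k : ℝ) + 1) - 1 / (4 * ((k : ℝ) + 1)) =
                  3 / (4 * ((k : ℝ) + 1)) := by field_simp; ring
              have e2 : 1 / (2 * ((k : ℝ) + 1)) ≤ 3 / (4 * ((k : ℝ) + 1)) := by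
                rw [div_le_div_iff₀ (by positivity) (by positivity)]
                nlinarith [Nat.cast_nonneg (α := ℝ) k]
              linarith
            linarith
          have hrle : rnk x k γ ≤ col γ k := hcol γ k x hxE
          have hmem' : γ ∈ B x k (rnk x k γ) := hrnk x k γ hiso hxE
          exact Set.mem_biUnion (Finset.mem_range.mpr (by omega)) hmem'
      exact ((Finset.range N).finite_toSet.biUnion (fun m _ => hBfin x k m)).subset hsubB
  -- the set of large coordinates is contained in a finite union
  have hsubset : {p : Γ × ℕ | ε < (ψ x p : ℝ)} ⊆
      ⋃ k ∈ Finset.range N,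
        ({γ : Γ | 1 / ((k : ℝ) + 1) < (h (x, false) γ : ℝ) ∧ col γ k < N} ×ˢ {k}) := by
    rintro ⟨γ, k⟩ hp
    have hp' : ε < max 0 ((h (x, false) γ : ℝ) - 1 / ((k : ℝ) + 1)) /
        ((k : ℝ) + (col γ k) + 2) := hp
    have hden : (0 : ℝ) < (k : ℝ) + (col γ k) + 2 := by positivity
    have hnum_le : max 0 ((h (x, false) γ : ℝ) - 1 / ((k : ℝ) + 1)) ≤ 1 := by
      have h1 : (h (x, false) γ : ℝ) ≤ 1 := (h (x, false) γ).2.2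
      have h2 : (0:ℝ) < 1 / ((k : ℝ) + 1) := by positivity
      apply max_le <;> linarith
    have h3 : ε * ((k : ℝ) + (col γ k) + 2) <
        max 0 ((h (x, false) γ : ℝ) - 1 / ((k : ℝ) + 1)) := (lt_div_iff₀ hden).mp hp'
    have hdlt : (k : ℝ) + (col γ k) + 2 < 1 / ε := by
      rw [lt_div_iff₀ hε]
      nlinarith
    have hklt : k < N := by
      have h1 : (k : ℝ) < 1 / ε := by
        have : (0:ℝ) ≤ (col γ k : ℝ) := Nat.cast_nonneg _
        linarith
      have h2 : (k : ℝ) < (⌈1 / ε⌉₊ : ℝ) + 1 := lt_of_lt_of_le h1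
        (by linarith [Nat.le_ceil (1 / ε)])
      rw [hN]
      exact_mod_cast h2
    have hcollt : col γ k < N := by
      have h1 : ((col γ k : ℕ) : ℝ) < 1 / ε := by
        have : (0:ℝ) ≤ (k : ℝ) := Nat.cast_nonneg _
        linarith
      have h2 : ((col γ k : ℕ) : ℝ) < (⌈1 / ε⌉₊ : ℝ) + 1 := lt_of_lt_of_le h1
        (by linarith [Nat.le_ceil (1 / ε)])
      rw [hN]
      exact_mod_cast h2
    have hnum_pos : 0 < max 0 ((h (x, false) γ : ℝ) - 1 / ((k : ℝ) + 1)) := by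
      by_contra hle
      push_neg at hle
      have : max 0 ((h (x, false) γ : ℝ) - 1 / ((k : ℝ) + 1)) = 0 :=
        le_antisymm hle (le_max_left _ _)
      rw [this] at hp'
      rw [zero_div] at hp'
      linarith
    have hglt : 1 / ((k : ℝ) + 1) < (h (x, false) γ : ℝ) := by
      by_contra hle
      push_neg at hle
      have : max 0 ((h (x, false) γ : ℝ) - 1 / ((k : ℝ) + 1)) = 0 :=
        max_eq_left (by linarith)
      rw [this] at hnum_pos
      exact lt_irrefl _ hnum_pos
    apply Set.mem_biUnion (Finset.mem_range.mpr hklt)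
    exact Set.mk_mem_prod ⟨hglt, hcollt⟩ rfl
  apply Set.Finite.subset _ hsubset
  apply (Finset.range N).finite_toSet.biUnion
  intro k _
  exact (hA k).prod (Set.finite_singleton k)

end Part2Main

/-- if `K` is Corson compact but not Eberlein compact, then `AD(K)` is
Corson compact but not semi-Eberlein. -/
theorem AD_corson_not_semiEberlein
    (K : Type u) [TopologicalSpace K] [CompactSpace K] [T2Space K]
    (hC : CorsonCompact K) (hnE : ¬ EberleinCompact K) :
    @CorsonCompact (K × Bool) (adTopology K) ∧
    ¬ @SemiEberlein (K × Bool) (adTopology K) := by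
  refine ⟨ad_corson hC, fun hSE => hnE (eberlein_of_ad_semiEberlein hC hSE)⟩
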